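/- Let c, M, T > 0 and define ψ(M,a,s) = (M + (1/2)c s² − a s)²/((2/3) s³) + 2ac for a ≥ 0 and s > 0. Then the infimum of ψ(M,a,s) over a ≥ 0 and s ∈ (0,T] equals (2/3)√6 · c√(cM) if √(6M/c) < T, and equals 2cM/T + c²T/3 otherwise. -/

import Mathlib

/-- The function `ψ(M,a,s) = (M + (1/2)c s² − a s)²/((2/3) s³) + 2ac`. -/
noncomputable def psi (c M a s : ℝ) : ℝ :=
  (M + (1 / 2) * c * s ^ 2 - a * s) ^ 2 / ((2 / 3) * s ^ 3) + 2 * a * c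

/-- The infimum of `ψ(M,a,s)` over `a ≥ 0` and `s ∈ (0,T]` equals
`(2/3)√6 · c√(cM)` if `√(6M/c) < T`, and `2cM/T + c²T/3` otherwise. -/
theorem inf_psi (c M T : ℝ) (hc : 0 < c) (hM : 0 < M) (hT : 0 < T) :
    sInf {y : ℝ | ∃ a s, 0 ≤ a ∧ s ∈ Set.Ioc (0 : ℝ) T ∧ y = psi c M a s}
      = if Real.sqrt (6 * M / c) < T then
          (2 / 3) * Real.sqrt 6 * c * Real.sqrt (c * M)
        else 2 * c * M / T + c ^ 2 * T / 3 := by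
  set S := {y : ℝ | ∃ a s, 0 ≤ a ∧ s ∈ Set.Ioc (0 : ℝ) T ∧ y = psi c M a s} with hS
  split_ifs with h
  · -- case √(6M/c) < T
    set r6 := Real.sqrt 6 with hr6def
    set r := Real.sqrt (c * M) with hrdef
    have h6 : r6 ^ 2 = 6 := Real.sq_sqrt (by norm_num)
    have hr : r ^ 2 = c * M := Real.sq_sqrt (by positivity)
    have hr6pos : 0 < r6 := Real.sqrt_pos.2 (by norm_num)
    have hrpos : 0 < r := Real.sqrt_pos.2 (by positivity)
    set t := Real.sqrt (6 * M / c) with htdef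
    have ht2 : t ^ 2 = 6 * M / c := Real.sq_sqrt (by positivity)
    have htpos : 0 < t := Real.sqrt_pos.2 (by positivity)
    have key : r6 * r * t = 6 * M := by
      rw [hr6def, hrdef, htdef, ← Real.sqrt_mul (by norm_num), ← Real.sqrt_mul (by positivity)]
      have : 6 * (c * M) * (6 * M / c) = (6 * M) ^ 2 := by
        field_simp
      rw [this, Real.sqrt_sq (by positivity)]
    have lower : ∀ y ∈ S, (2 / 3) * r6 * c * r ≤ y := by
      rintro y ⟨a, s, ha, ⟨hs, hsT⟩, rfl⟩
      rw [psi]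
      have hD : (0:ℝ) < (2 / 3) * s ^ 3 := by positivity
      have step : (2 / 3) * r6 * c * r - 2 * a * c
          ≤ (M + (1 / 2) * c * s ^ 2 - a * s) ^ 2 / ((2 / 3) * s ^ 3) := by
        rw [le_div_iff₀ hD]
        have h6r : (r6 * r) ^ 2 = 6 * (c * M) := by rw [mul_pow, h6, hr]
        nlinarith [sq_nonneg (6 * M - c * s ^ 2 - 6 * a * s),
          sq_nonneg (s * (c * s - r6 * r)), sq_nonneg s, mul_pos hs hs]
      linarith
    have mem : (2 / 3) * r6 * c * r ∈ S := by
      refine ⟨0, t, le_refl 0, ⟨htpos, le_of_lt h⟩, ?_⟩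
      rw [psi]
      have h3 : t ^ 3 = (6 * M / c) * t := by
        rw [pow_succ, ht2]
      rw [h3, ht2]
      field_simp
      linear_combination (96 * M) * key
    exact le_antisymm (csInf_le ⟨_, lower⟩ mem) (le_csInf ⟨_, mem⟩ lower)
  · -- case T ≤ √(6M/c)
    push_neg at h
    have hcT : c * T ^ 2 ≤ 6 * M := by
      have hT2 : T ^ 2 ≤ 6 * M / c := by
        nlinarith [Real.sq_sqrt (show (0:ℝ) ≤ 6 * M / c by positivity),
          Real.sqrt_nonneg (6 * M / c), h]
      calc c * T ^ 2 ≤ c * (6 * M / c) := by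
            exact mul_le_mul_of_nonneg_left hT2 hc.le
        _ = 6 * M := by field_simp
    have lower : ∀ y ∈ S, 2 * c * M / T + c ^ 2 * T / 3 ≤ y := by
      rintro y ⟨a, s, ha, ⟨hs, hsT⟩, rfl⟩
      rw [psi]
      have hD : (0:ℝ) < (2 / 3) * s ^ 3 := by positivity
      have htar : 2 * c * M / T + c ^ 2 * T / 3 = (6 * c * M + c ^ 2 * T ^ 2) / (3 * T) := by
        field_simp; ring
      have step : 2 * c * M / T + c ^ 2 * T / 3
          ≤ (M + (1 / 2) * c * s ^ 2 - a * s) ^ 2 / ((2 / 3) * s ^ 3) + 2 * a * c := by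
        rw [htar, div_add' _ _ _ (ne_of_gt hD),
          div_le_div_iff₀ (by positivity : (0:ℝ) < 3 * T) hD]
        have h1 : 0 ≤ T - s := by linarith
        have h2 : 0 ≤ 6 * M - c * s * T := by nlinarith
        have hTpos := hT
        nlinarith [sq_nonneg (6 * M - c * s ^ 2 - 6 * a * s),
          mul_nonneg (mul_nonneg (mul_nonneg (sq_nonneg s) h1) h2) hc.le,
          mul_pos hs hs, hs.le]
      linarith
    have ha0 : 0 ≤ M / T - c * T / 6 := by
      rw [sub_nonneg, div_le_div_iff₀ (by norm_num) hT]
      nlinarith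
    have mem : 2 * c * M / T + c ^ 2 * T / 3 ∈ S := by
      refine ⟨M / T - c * T / 6, T, ha0, ⟨hT, le_refl T⟩, ?_⟩
      rw [psi]
      field_simp
      ring
    exact le_antisymm (csInf_le ⟨_, lower⟩ mem) (le_csInf ⟨_, mem⟩ lower)
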